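/- The function φ(ξ) = φ_r − (φ_r − φ₁)·tanh²((1/2)·√((φ_r−φ₁)/(3c))·ξ) satisfies the ODE (φ′)² = (1/(3c))·(φ_r − φ)·(φ − φ₁)² for all ξ ∈ ℝ. -/

import Mathlib

lemma my_hasDerivAt_tanh (x : ℝ) :
    HasDerivAt Real.tanh (1 / Real.cosh x ^ 2) x := by
  have hc : Real.cosh x ≠ 0 := ne_of_gt (Real.cosh_pos x)
  have h := (Real.hasDerivAt_sinh x).div (Real.hasDerivAt_cosh x) hc
  have heq : (fun y => Real.sinh y / Real.cosh y) = Real.tanh := by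
    funext y; rw [Real.tanh_eq_sinh_div_cosh]
  rw [show (Real.sinh / Real.cosh) = Real.tanh from heq] at h
  refine h.congr_deriv ?_
  field_simp
  linear_combination Real.cosh_sq_sub_sinh_sq x

lemma my_one_sub_tanh_sq (x : ℝ) : 1 - Real.tanh x ^ 2 = 1 / Real.cosh x ^ 2 := by
  have hc : Real.cosh x ≠ 0 := ne_of_gt (Real.cosh_pos x)
  rw [Real.tanh_eq_sinh_div_cosh]
  field_simp
  exact Real.cosh_sq_sub_sinh_sq x

theorem solitary_profile_ode (c φ₁ φr : ℝ) (hc : 0 < c) (hlt : φ₁ < φr) :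
    let φ : ℝ → ℝ := fun ξ =>
      φr - (φr - φ₁) * Real.tanh ((1 / 2) * Real.sqrt ((φr - φ₁) / (3 * c)) * ξ) ^ 2
    ∀ ξ : ℝ, (deriv φ ξ) ^ 2 = (1 / (3 * c)) * (φr - φ ξ) * (φ ξ - φ₁) ^ 2 := by
  intro φ ξ
  set a : ℝ := (1 / 2) * Real.sqrt ((φr - φ₁) / (3 * c)) with ha
  have hk : (0:ℝ) ≤ (φr - φ₁) / (3 * c) := div_nonneg (by linarith) (by positivity)
  have hsq : Real.sqrt ((φr - φ₁) / (3 * c)) ^ 2 = (φr - φ₁) / (3 * c) :=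
    Real.sq_sqrt hk
  have hlin : HasDerivAt (fun ξ : ℝ => a * ξ) a ξ := by
    simpa using (hasDerivAt_id ξ).const_mul a
  have h1 : HasDerivAt (fun ξ : ℝ => Real.tanh (a * ξ))
      ((1 / Real.cosh (a * ξ) ^ 2) * a) ξ :=
    (my_hasDerivAt_tanh (a * ξ)).comp ξ hlin
  have h2 : HasDerivAt φ
      (-((φr - φ₁) * (2 * Real.tanh (a * ξ) * ((1 / Real.cosh (a * ξ) ^ 2) * a)))) ξ := by
    have := ((h1.pow 2).const_mul (φr - φ₁)).const_sub φr
    refine this.congr_deriv ?_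
    ring
  rw [h2.deriv]
  simp only [φ]
  rw [← ha]
  set t := Real.tanh (a * ξ)
  have ht : 1 / Real.cosh (a * ξ) ^ 2 = 1 - t ^ 2 := (my_one_sub_tanh_sq (a * ξ)).symm
  rw [ht]
  have h3c : (3 * c) ≠ 0 := by positivity
  have ha2 : 12 * c * a ^ 2 = φr - φ₁ := by rw [ha, mul_pow, hsq]; field_simp; ring
  field_simp
  linear_combination ((φr - φ₁) * t * (1 - t ^ 2)) ^ 2 * ha2
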